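/- Let M be a matroid of rank 3 on a finite ground set E, and let H₁, H₂, H₃ be three pairwise distinct flats of M of rank 2. If the intersection F := H₁ ∩ H₂ ∩ H₃ is a flat of rank 1, then H₃ is not contained in H₁ ∪ H₂. -/

import Mathlib

/-- The rank (in `ℕ∞`) of a set `X` in a matroid `M`: the supremum of the cardinalities
of independent subsets of `X`. -/
noncomputable def Matroid.setRank {α : Type*} (M : Matroid α) (X : Set α) : ℕ∞ :=
  ⨆ I ∈ {I : Set α | M.Indep I ∧ I ⊆ X}, I.encard

namespace StarshipAux

open Set

variable {α : Type*} {M : Matroid α} {X Y G H I : Set α} {c : ℕ∞}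

lemma le_setRank (hI : M.Indep I) (hIX : I ⊆ X) : I.encard ≤ M.setRank X :=
  le_biSup _ (by exact ⟨hI, hIX⟩)

lemma exists_big (h : ¬ M.setRank X ≤ c) : ∃ I, M.Indep I ∧ I ⊆ X ∧ c < I.encard := by
  by_contra h'
  push_neg at h'
  exact h (iSup₂_le fun I hI => h' I hI.1 hI.2)

lemma flat_inter (hA : M.IsFlat X) (hB : M.IsFlat Y) : M.IsFlat (X ∩ Y) := by
  rw [Set.inter_eq_iInter]
  exact Matroid.IsFlat.iInter (fun b => by cases b <;> simpa)

/-- key step: extending an independent subset of a flat `G` by a point of `H \ G`. -/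
lemma step (hG : M.IsFlat G) (hGH : G ⊆ H) (hHE : H ⊆ M.E) {e : α} (heH : e ∈ H)
    (heG : e ∉ G) (hI : M.Indep I) (hIG : I ⊆ G) :
    I.encard + 1 ≤ M.setRank H := by
  have heI : e ∉ I := fun h => heG (hIG h)
  have hcl : e ∉ M.closure I := fun h => heG (hG.closure ▸ M.closure_subset_closure hIG h)
  have hins : M.Indep (insert e I) := by
    rw [hI.insert_indep_iff_of_notMem heI]
    exact ⟨hHE heH, hcl⟩
  have hsub : insert e I ⊆ H := insert_subset heH (hIG.trans hGH)
  have := le_setRank hins hsub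
  rwa [encard_insert_of_notMem heI] at this

end StarshipAux

/-- **Lemma (matroid flats).** Let `M` be a matroid of rank 3 on a finite ground set,
and `H₁, H₂, H₃` pairwise distinct flats of rank 2. If `F = H₁ ∩ H₂ ∩ H₃` is a flat of
rank 1, then `H₃` is not contained in `H₁ ∪ H₂`. -/
theorem stmt_0 {α : Type*} (M : Matroid α) (hfin : M.E.Finite)
    (hrk : M.setRank M.E = 3)
    (H₁ H₂ H₃ : Set α)
    (hH₁ : M.IsFlat H₁) (hH₂ : M.IsFlat H₂) (hH₃ : M.IsFlat H₃)
    (h12 : H₁ ≠ H₂) (h13 : H₁ ≠ H₃) (h23 : H₂ ≠ H₃)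
    (hr₁ : M.setRank H₁ = 2) (hr₂ : M.setRank H₂ = 2) (hr₃ : M.setRank H₃ = 2)
    (hFflat : M.IsFlat (H₁ ∩ H₂ ∩ H₃)) (hFr : M.setRank (H₁ ∩ H₂ ∩ H₃) = 1) :
    ¬ H₃ ⊆ H₁ ∪ H₂ := by
  intro hsub
  set F := H₁ ∩ H₂ ∩ H₃ with hFdef
  -- an independent 2-set in H₃
  obtain ⟨I₃, hI₃, hI₃sub, hI₃big⟩ : ∃ I, M.Indep I ∧ I ⊆ H₃ ∧ (1 : ℕ∞) < I.encard := by
    apply StarshipAux.exists_big; rw [hr₃]; decide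
  have hI₃2 : (2 : ℕ∞) ≤ I₃.encard := Order.add_one_le_of_lt hI₃big
  -- a point of F
  obtain ⟨I₀, hI₀, hI₀sub, hI₀big⟩ : ∃ I, M.Indep I ∧ I ⊆ F ∧ (0 : ℕ∞) < I.encard := by
    apply StarshipAux.exists_big; rw [hFr]; decide
  obtain ⟨x, hx⟩ := Set.encard_pos.mp hI₀big
  have hxF : x ∈ F := hI₀sub hx
  have hxI : M.Indep {x} := hI₀.subset (Set.singleton_subset_iff.mpr hx)
  -- H₃ is not contained in H₁ (or H₂)
  have hnot : ∀ H', M.IsFlat H' → M.setRank H' = 2 → H' ≠ H₃ → ¬ H₃ ⊆ H' := by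
    intro H' hH' hr' hne hcon
    obtain ⟨e, heH', heH₃⟩ : ∃ e, e ∈ H' ∧ e ∉ H₃ := by
      by_contra h; push_neg at h
      exact hne (Set.Subset.antisymm h hcon)
    have := StarshipAux.step hH₃ hcon hH'.subset_ground heH' heH₃ hI₃ hI₃sub
    rw [hr'] at this
    have h3 : (3 : ℕ∞) ≤ 2 := le_trans (by exact add_le_add_left hI₃2 1) this
    exact absurd h3 (by decide)
  obtain ⟨a, haH₃, haH₁⟩ : ∃ a, a ∈ H₃ ∧ a ∉ H₁ := by
    by_contra h; push_neg at h
    exact hnot H₁ hH₁ hr₁ h13 h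
  obtain ⟨b, hbH₃, hbH₂⟩ : ∃ b, b ∈ H₃ ∧ b ∉ H₂ := by
    by_contra h; push_neg at h
    exact hnot H₂ hH₂ hr₂ h23 h
  have haH₂ : a ∈ H₂ := (hsub haH₃).resolve_left haH₁
  -- the flat H₂ ∩ H₃ has rank ≥ 2
  have hGflat : M.IsFlat (H₂ ∩ H₃) := StarshipAux.flat_inter hH₂ hH₃
  have hFG : F ⊆ H₂ ∩ H₃ := fun y hy => ⟨hy.1.2, hy.2⟩
  have haG : a ∈ H₂ ∩ H₃ := ⟨haH₂, haH₃⟩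
  have haF : a ∉ F := fun h => haH₁ h.1.1
  have hG2 : (2 : ℕ∞) ≤ M.setRank (H₂ ∩ H₃) := by
    have := StarshipAux.step hFflat hFG (hGflat.subset_ground) haG haF hxI
      (Set.singleton_subset_iff.mpr hxF)
    rwa [Set.encard_singleton] at this
  -- an independent 2-set in H₂ ∩ H₃, extended by b, contradicts rank H₃ = 2
  obtain ⟨J, hJ, hJsub, hJbig⟩ : ∃ J, M.Indep J ∧ J ⊆ H₂ ∩ H₃ ∧ (1 : ℕ∞) < J.encard := by
    apply StarshipAux.exists_big
    intro h
    exact absurd (le_trans hG2 h) (by decide)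
  have hJ2 : (2 : ℕ∞) ≤ J.encard := Order.add_one_le_of_lt hJbig
  have hbG : b ∉ H₂ ∩ H₃ := fun h => hbH₂ h.1
  have := StarshipAux.step hGflat (Set.inter_subset_right) hH₃.subset_ground hbH₃ hbG hJ hJsub
  rw [hr₃] at this
  have h3 : (3 : ℕ∞) ≤ 2 := le_trans (by exact add_le_add_left hJ2 1) this
  exact absurd h3 (by decide)
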